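/- Fix a ∈ ℝ. For nonnegative reals e' ≥ e ≥ 0 and any bounded non-decreasing measurable V : ℝ₊ → ℝ₊, with ψ(x, c) := exp(-(x-c)²/2) + exp(-(x+c)²/2): e'² + β·∫_{0}^{∞} ψ(z, a·e')·V(z) dz ≥ e² + β·∫_{0}^{∞} ψ(z, a·e)·V(z) dz for any β ≥ 0. -/
import Mathlib

open MeasureTheory Real

namespace Stmt19Aux

noncomputable def gk (x : ℝ) : ℝ := Real.exp (-x ^ 2 / 2)

lemma gk_neg (x : ℝ) : gk (-x) = gk x := by simp [gk, neg_sq]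

lemma gk_nonneg (x : ℝ) : 0 ≤ gk x := (Real.exp_pos _).le

lemma gk_measurable : Measurable gk :=
  Real.measurable_exp.comp (((measurable_id.pow_const 2).neg).div_const 2)

lemma gk_eq (x : ℝ) : Real.exp (-(1/2) * x ^ 2) = gk x := by
  unfold gk; congr 1; ring

lemma gk_integrable : Integrable gk := by
  have h := integrable_exp_neg_mul_sq (show (0:ℝ) < 1/2 by norm_num)
  exact h.congr (Filter.Eventually.of_forall fun x => gk_eq x)

lemma gk_anti {u v : ℝ} (h : u ^ 2 ≤ v ^ 2) : gk v ≤ gk u := by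
  unfold gk
  apply Real.exp_le_exp.2
  linarith

/-- translation for set integrals over `Ioi`. -/
lemma integral_Ioi_comp_add_right (f : ℝ → ℝ) (a d : ℝ) :
    ∫ x in Set.Ioi a, f (x + d) = ∫ x in Set.Ioi (a + d), f x := by
  have A : MeasurableEmbedding fun x : ℝ => x + d :=
    (Homeomorph.addRight d).measurableEmbedding
  have h := A.setIntegral_map (μ := volume) (g := f) (s := Set.Ioi (a + d))
  rw [map_add_right_eq_self] at h
  have hpre : (fun x : ℝ => x + d) ⁻¹' Set.Ioi (a + d) = Set.Ioi a := by
    ext x; simp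
  rw [hpre] at h
  exact h.symm

lemma int_gen (F : ℝ → ℝ) (hF : Measurable F) (hFpos : ∀ x, 0 ≤ F x) (C : ℝ)
    (hC : ∀ x, F x ≤ C) (t : ℝ) : Integrable (fun u => gk (u + t) * F u) := by
  have hint : Integrable (fun u => C * gk (u + t)) :=
    (gk_integrable.comp_add_right t).const_mul C
  refine hint.mono' ?_ ?_
  · exact ((gk_measurable.comp (measurable_add_const t)).mul hF).aestronglyMeasurable
  · refine Filter.Eventually.of_forall fun u => ?_
    rw [Real.norm_eq_abs, abs_of_nonneg (mul_nonneg (gk_nonneg _) (hFpos _))]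
    calc gk (u + t) * F u ≤ gk (u + t) * C :=
          mul_le_mul_of_nonneg_left (hC _) (gk_nonneg _)
      _ = C * gk (u + t) := mul_comm _ _

section Main

variable (V : ℝ → ℝ) (hVmeas : Measurable V) (hVpos : ∀ x, 0 ≤ V x)
  (C : ℝ) (hC : ∀ x, V x ≤ C)

include hVmeas hVpos hC in
lemma int_abs (t r : ℝ) : Integrable (fun u => gk (u + t) * V |u + r|) := by
  exact int_gen (fun u => V |u + r|)
    (hVmeas.comp ((measurable_add_const r).abs)) (fun x => hVpos _) C (fun x => hC _) t

include hVmeas hVpos hC in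
lemma repA (c : ℝ) (hc : 0 ≤ c) :
    ∫ z in Set.Ici (0:ℝ),
        (Real.exp (-(z - c) ^ 2 / 2) + Real.exp (-(z + c) ^ 2 / 2)) * V z
      = ∫ u, gk u * V |u + c| := by
  have hInt : Integrable (fun u => gk u * V |u + c|) := by
    simpa using int_abs V hVmeas hVpos C hC 0 c
  -- left piece
  have left : ∫ u in Set.Iic (-c), gk u * V |u + c|
      = ∫ z in Set.Ioi (0:ℝ), gk (z + c) * V z := by
    have e1 : ∀ u, gk u * V |u + c| = (fun y => gk y * V |y - c|) (-u) := by
      intro u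
      simp only
      rw [show -u - c = -(u + c) by ring, abs_neg, gk_neg]
    calc ∫ u in Set.Iic (-c), gk u * V |u + c|
        = ∫ x in Set.Iic (-c), (fun y => gk y * V |y - c|) (-x) := by
          exact setIntegral_congr_fun measurableSet_Iic fun x _ => e1 x
      _ = ∫ x in Set.Ioi (- -c), gk x * V |x - c| :=
          integral_comp_neg_Iic (-c) (fun y => gk y * V |y - c|)
      _ = ∫ x in Set.Ioi (0 + c), gk x * V |x - c| := by norm_num
      _ = ∫ z in Set.Ioi (0:ℝ), gk (z + c) * V |z + c - c| :=
          (integral_Ioi_comp_add_right _ 0 c).symm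
      _ = ∫ z in Set.Ioi (0:ℝ), gk (z + c) * V z := by
          refine setIntegral_congr_fun measurableSet_Ioi fun z hz => ?_
          rw [show z + c - c = z by ring, abs_of_nonneg (le_of_lt hz)]
  -- right piece
  have right : ∫ u in Set.Ioi (-c), gk u * V |u + c|
      = ∫ z in Set.Ioi (0:ℝ), gk (z - c) * V z := by
    calc ∫ u in Set.Ioi (-c), gk u * V |u + c|
        = ∫ u in Set.Ioi (0 + -c), gk u * V |u + c| := by norm_num
      _ = ∫ z in Set.Ioi (0:ℝ), gk (z + -c) * V |z + -c + c| :=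
          (integral_Ioi_comp_add_right _ 0 (-c)).symm
      _ = ∫ z in Set.Ioi (0:ℝ), gk (z - c) * V z := by
          refine setIntegral_congr_fun measurableSet_Ioi fun z hz => ?_
          rw [show z + -c + c = z by ring, abs_of_nonneg (le_of_lt hz),
            show z + -c = z - c by ring]
  have split := intervalIntegral.integral_Iic_add_Ioi (b := -c) hInt.integrableOn hInt.integrableOn
  have igl : IntegrableOn (fun z => gk (z - c) * V z) (Set.Ioi (0:ℝ)) := by
    have := int_gen V hVmeas hVpos C hC (-c)
    exact (this.congr (Filter.Eventually.of_forall fun z => by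
      simp only [sub_eq_add_neg])).integrableOn
  have igr : IntegrableOn (fun z => gk (z + c) * V z) (Set.Ioi (0:ℝ)) :=
    (int_gen V hVmeas hVpos C hC c).integrableOn
  calc ∫ z in Set.Ici (0:ℝ),
        (Real.exp (-(z - c) ^ 2 / 2) + Real.exp (-(z + c) ^ 2 / 2)) * V z
      = ∫ z in Set.Ioi (0:ℝ), (gk (z - c) * V z + gk (z + c) * V z) := by
        rw [integral_Ici_eq_integral_Ioi]
        refine setIntegral_congr_fun measurableSet_Ioi fun z _ => ?_
        unfold gk; ring
    _ = (∫ z in Set.Ioi (0:ℝ), gk (z - c) * V z)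
        + ∫ z in Set.Ioi (0:ℝ), gk (z + c) * V z := integral_add igl igr
    _ = ∫ u, gk u * V |u + c| := by rw [← left, ← right, ← split]; ring

include hVmeas hVpos hC in
lemma repB (hVmono : MonotoneOn V (Set.Ici 0)) (c c' : ℝ) (hc : 0 ≤ c) (hcc : c ≤ c') :
    ∫ u, gk u * V |u + c| ≤ ∫ u, gk u * V |u + c'| := by
  set s := (c + c') / 2 with hs_def
  have hs : 0 ≤ s := by simp only [hs_def]; linarith
  have H00 : Integrable (fun u => gk u * V |u + c|) := by
    simpa using int_abs V hVmeas hVpos C hC 0 c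
  have H00' : Integrable (fun u => gk u * V |u + c'|) := by
    simpa using int_abs V hVmeas hVpos C hC 0 c'
  have H2s : Integrable (fun u => gk (u + 2*s) * V |u + c|) :=
    int_abs V hVmeas hVpos C hC (2*s) c
  have H2s' : Integrable (fun u => gk (u + 2*s) * V |u + c'|) :=
    int_abs V hVmeas hVpos C hC (2*s) c'
  -- reflection identity
  have refl : ∀ d d' : ℝ, 2*s - d = d' →
      ∫ u in Set.Iic (-s), gk u * V |u + d|
        = ∫ u in Set.Ioi (-s), gk (u + 2*s) * V |u + d'| := by
    intro d d' hdd
    have e1 : ∀ u, gk u * V |u + d| = (fun y => gk y * V |y - d|) (-u) := by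
      intro u
      simp only
      rw [show -u - d = -(u + d) by ring, abs_neg, gk_neg]
    calc ∫ u in Set.Iic (-s), gk u * V |u + d|
        = ∫ x in Set.Iic (-s), (fun y => gk y * V |y - d|) (-x) :=
          setIntegral_congr_fun measurableSet_Iic fun x _ => e1 x
      _ = ∫ x in Set.Ioi (- -s), gk x * V |x - d| := integral_comp_neg_Iic (-s) (fun y => gk y * V |y - d|)
      _ = ∫ x in Set.Ioi (-s + 2*s), gk x * V |x - d| := by ring_nf
      _ = ∫ u in Set.Ioi (-s), gk (u + 2*s) * V |u + 2*s - d| :=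
          (integral_Ioi_comp_add_right _ (-s) (2*s)).symm
      _ = ∫ u in Set.Ioi (-s), gk (u + 2*s) * V |u + d'| := by
          refine setIntegral_congr_fun measurableSet_Ioi fun u _ => ?_
          rw [show u + 2*s - d = u + (2*s - d) by ring, hdd]
  have hdc : 2*s - c = c' := by simp only [hs_def]; ring
  have hdc' : 2*s - c' = c := by simp only [hs_def]; ring
  have refl1 := refl c c' hdc
  have refl2 := refl c' c hdc'
  have split1 := intervalIntegral.integral_Iic_add_Ioi (b := -s) H00.integrableOn H00.integrableOn
  have split2 := intervalIntegral.integral_Iic_add_Ioi (b := -s) H00'.integrableOn H00'.integrableOn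
  -- the key nonnegative integral
  have key : 0 ≤ ∫ u in Set.Ioi (-s),
      (gk u - gk (u + 2*s)) * (V |u + c'| - V |u + c|) := by
    refine setIntegral_nonneg measurableSet_Ioi fun u hu => ?_
    have hu' : -s < u := hu
    have h1 : gk (u + 2*s) ≤ gk u := gk_anti (by nlinarith)
    have habs : |u + c| ≤ |u + c'| := by
      rw [abs_le]
      constructor
      · have : 0 ≤ u + c' := by simp only [hs_def] at hu' ⊢; linarith
        rw [abs_of_nonneg this]; simp only [hs_def] at hu'; linarith
      · have : 0 ≤ u + c' := by simp only [hs_def] at hu' ⊢; linarith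
        rw [abs_of_nonneg this]; linarith
    have h2 : V |u + c| ≤ V |u + c'| :=
      hVmono (Set.mem_Ici.2 (abs_nonneg _)) (Set.mem_Ici.2 (abs_nonneg _)) habs
    exact mul_nonneg (by linarith) (by linarith)
  -- rewrite key integrand
  have e3 : ∫ u in Set.Ioi (-s), (gk u - gk (u + 2*s)) * (V |u + c'| - V |u + c|)
      = ∫ u in Set.Ioi (-s),
          ((gk u * V |u + c'| + gk (u + 2*s) * V |u + c|)
            - (gk u * V |u + c| + gk (u + 2*s) * V |u + c'|)) :=
    setIntegral_congr_fun measurableSet_Ioi fun u _ => by ring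
  have iA : IntegrableOn (fun u => gk u * V |u + c'|) (Set.Ioi (-s)) volume :=
    H00'.integrableOn
  have iB : IntegrableOn (fun u => gk (u + 2*s) * V |u + c|) (Set.Ioi (-s)) volume :=
    H2s.integrableOn
  have iC : IntegrableOn (fun u => gk u * V |u + c|) (Set.Ioi (-s)) volume :=
    H00.integrableOn
  have iD : IntegrableOn (fun u => gk (u + 2*s) * V |u + c'|) (Set.Ioi (-s)) volume :=
    H2s'.integrableOn
  have e4 := integral_sub (μ := volume.restrict (Set.Ioi (-s)))
    (f := fun u => gk u * V |u + c'| + gk (u + 2*s) * V |u + c|)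
    (g := fun u => gk u * V |u + c| + gk (u + 2*s) * V |u + c'|)
    (iA.add iB) (iC.add iD)
  have e5 := integral_add (μ := volume.restrict (Set.Ioi (-s)))
    (f := fun u => gk u * V |u + c'|) (g := fun u => gk (u + 2*s) * V |u + c|)
    iA iB
  have e6 := integral_add (μ := volume.restrict (Set.Ioi (-s)))
    (f := fun u => gk u * V |u + c|) (g := fun u => gk (u + 2*s) * V |u + c'|)
    iC iD
  linarith [key, e3, e4, e5, e6, split1, split2, refl1, refl2]

end Main

end Stmt19Aux

open Stmt19Aux

theorem stmt_19 (a β e e' : ℝ) (hβ : 0 ≤ β) (he : 0 ≤ e) (hee : e ≤ e')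
    (V : ℝ → ℝ) (hVmeas : Measurable V) (hVpos : ∀ x, 0 ≤ V x)
    (hVmono : MonotoneOn V (Set.Ici 0)) (hVbd : ∃ C : ℝ, ∀ x, V x ≤ C) :
    e' ^ 2 + β * ∫ z in Set.Ici (0 : ℝ),
        (Real.exp (-(z - a * e') ^ 2 / 2) + Real.exp (-(z + a * e') ^ 2 / 2)) * V z ≥
      e ^ 2 + β * ∫ z in Set.Ici (0 : ℝ),
        (Real.exp (-(z - a * e) ^ 2 / 2) + Real.exp (-(z + a * e) ^ 2 / 2)) * V z := by
  obtain ⟨C, hC⟩ := hVbd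
  have he' : 0 ≤ e' := he.trans hee
  -- symmetry in the parameter: replace a*e by |a|*e
  have hsym : ∀ (t : ℝ) (f : ℝ → ℝ),
      ∫ z in Set.Ici (0:ℝ),
          (Real.exp (-(z - t) ^ 2 / 2) + Real.exp (-(z + t) ^ 2 / 2)) * f z
        = ∫ z in Set.Ici (0:ℝ),
          (Real.exp (-(z - |t|) ^ 2 / 2) + Real.exp (-(z + |t|) ^ 2 / 2)) * f z := by
    intro t f
    rcases abs_cases t with ⟨h, _⟩ | ⟨h, _⟩
    · rw [h]
    · rw [h]
      refine setIntegral_congr_fun measurableSet_Ici fun z _ => ?_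
      rw [show z - -t = z + t by ring, show z + -t = z - t by ring]
      ring
  have hkey : ∫ z in Set.Ici (0:ℝ),
        (Real.exp (-(z - a * e) ^ 2 / 2) + Real.exp (-(z + a * e) ^ 2 / 2)) * V z
      ≤ ∫ z in Set.Ici (0:ℝ),
        (Real.exp (-(z - a * e') ^ 2 / 2) + Real.exp (-(z + a * e') ^ 2 / 2)) * V z := by
    rw [hsym (a * e) V, hsym (a * e') V]
    have hae : |a * e| = |a| * e := by rw [abs_mul, abs_of_nonneg he]
    have hae' : |a * e'| = |a| * e' := by rw [abs_mul, abs_of_nonneg he']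
    rw [hae, hae']
    have h1 : (0:ℝ) ≤ |a| * e := mul_nonneg (abs_nonneg a) he
    have h2 : |a| * e ≤ |a| * e' := mul_le_mul_of_nonneg_left hee (abs_nonneg a)
    rw [repA V hVmeas hVpos C hC (|a| * e) h1,
      repA V hVmeas hVpos C hC (|a| * e') (h1.trans h2)]
    exact repB V hVmeas hVpos C hC hVmono (|a| * e) (|a| * e') h1 h2
  have hsq : e ^ 2 ≤ e' ^ 2 := pow_le_pow_left₀ he hee 2
  have := mul_le_mul_of_nonneg_left hkey hβ
  linarith
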